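/- Let Ψ > 0, κ₁ > 0, κ₂ > 0, and let u₋, u₊, a₀, Ω be real numbers with a₀ > 0. Then, as t → +∞, the eight-term bracket [ F(κ₁t + u₋, κ₂t + a₀ − Ω) − F(κ₁t + u₋, κ₂t − a₀ − Ω) + F(κ₁t + u₋, κ₂t + a₀ + Ω) − F(κ₁t + u₋, κ₂t − a₀ + Ω) + F(κ₁t + u₊, κ₂t + a₀ − Ω) − F(κ₁t + u₊, κ₂t − a₀ − Ω) + F(κ₁t + u₊, κ₂t + a₀ + Ω) − F(κ₁t + u₊, κ₂t − a₀ + Ω) ] converges to 4π·a₀/Ψ. -/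

import Mathlib

open Real Filter

/-- `F(x, y) := arcsinh(x/√(Ψ² + y²)) + (y/Ψ)·arctan(x·y/(Ψ·√(Ψ² + x² + y²)))`. -/
noncomputable def F (Ψ x y : ℝ) : ℝ :=
  Real.arsinh (x / Real.sqrt (Ψ ^ 2 + y ^ 2)) +
    (y / Ψ) * Real.arctan (x * y / (Ψ * Real.sqrt (Ψ ^ 2 + x ^ 2 + y ^ 2)))

lemma ratio_lim (a b c d : ℝ) (hc : 0 < c) :
    Tendsto (fun t : ℝ => (a * t + b) / (c * t + d)) atTop (nhds (a / c)) := by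
  have hb : Tendsto (fun t : ℝ => b / t) atTop (nhds 0) :=
    tendsto_const_nhds.div_atTop tendsto_id
  have hd : Tendsto (fun t : ℝ => d / t) atTop (nhds 0) :=
    tendsto_const_nhds.div_atTop tendsto_id
  have hnum : Tendsto (fun t : ℝ => a + b / t) atTop (nhds (a + 0)) :=
    tendsto_const_nhds.add hb
  have hden : Tendsto (fun t : ℝ => c + d / t) atTop (nhds (c + 0)) :=
    tendsto_const_nhds.add hd
  have h1 : Tendsto (fun t : ℝ => (a + b / t) / (c + d / t)) atTop (nhds ((a + 0) / (c + 0))) :=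
    hnum.div hden (by simpa using hc.ne')
  rw [add_zero, add_zero] at h1
  refine h1.congr' ?_
  filter_upwards [eventually_gt_atTop 0] with t ht
  have ht' : t ≠ 0 := ht.ne'
  have e1 : a * t + b = (a + b / t) * t := by field_simp
  have e2 : c * t + d = (c + d / t) * t := by field_simp
  rw [e1, e2, mul_div_mul_right _ _ ht']

lemma main_piece (Ψ κ₁ κ₂ u c : ℝ) (hΨ : 0 < Ψ) (hκ₁ : 0 < κ₁) (hκ₂ : 0 < κ₂) :
    Tendsto (fun t : ℝ => F Ψ (κ₁ * t + u) (κ₂ * t + c) - (κ₂ * t + c) * π / (2 * Ψ))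
      atTop (nhds (Real.arsinh (κ₁ / κ₂) - Real.sqrt (κ₁ ^ 2 + κ₂ ^ 2) / κ₁)) := by
  set x : ℝ → ℝ := fun t => κ₁ * t + u with hxdef
  set y : ℝ → ℝ := fun t => κ₂ * t + c with hydef
  have hx_top : Tendsto x atTop atTop :=
    tendsto_atTop_add_const_right _ u (Tendsto.const_mul_atTop hκ₁ tendsto_id)
  have hy_top : Tendsto y atTop atTop :=
    tendsto_atTop_add_const_right _ c (Tendsto.const_mul_atTop hκ₂ tendsto_id)
  have hxpos : ∀ᶠ t in atTop, 0 < x t := hx_top.eventually_gt_atTop 0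
  have hypos : ∀ᶠ t in atTop, 0 < y t := hy_top.eventually_gt_atTop 0
  have hxy : Tendsto (fun t => x t / y t) atTop (nhds (κ₁ / κ₂)) := ratio_lim _ _ _ _ hκ₂
  have hyx : Tendsto (fun t => y t / x t) atTop (nhds (κ₂ / κ₁)) := ratio_lim _ _ _ _ hκ₁
  have hΨx : Tendsto (fun t => Ψ / x t) atTop (nhds 0) := by
    have := ratio_lim 0 Ψ κ₁ u hκ₁
    simpa using this
  have hΨy : Tendsto (fun t => Ψ / y t) atTop (nhds 0) := by
    have := ratio_lim 0 Ψ κ₂ c hκ₂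
    simpa using this
  -- arsinh part
  have harg : Tendsto (fun t => x t / Real.sqrt (Ψ ^ 2 + y t ^ 2)) atTop (nhds (κ₁ / κ₂)) := by
    have hs : Tendsto (fun t => Real.sqrt ((Ψ / y t) ^ 2 + 1)) atTop
        (nhds (Real.sqrt ((0 : ℝ) ^ 2 + 1))) := ((hΨy.pow 2).add tendsto_const_nhds).sqrt
    have hs1 : Tendsto (fun t => Real.sqrt ((Ψ / y t) ^ 2 + 1)) atTop (nhds 1) := by
      simpa using hs
    have h1 : Tendsto (fun t => (x t / y t) / Real.sqrt ((Ψ / y t) ^ 2 + 1)) atTop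
        (nhds (κ₁ / κ₂ / 1)) := hxy.div hs1 one_ne_zero
    rw [div_one] at h1
    refine h1.congr' ?_
    filter_upwards [hypos] with t ht
    have hsq : Real.sqrt ((Ψ / y t) ^ 2 + 1) = Real.sqrt (Ψ ^ 2 + y t ^ 2) / y t := by
      rw [show (Ψ / y t) ^ 2 + 1 = (Ψ ^ 2 + y t ^ 2) / y t ^ 2 by field_simp,
        Real.sqrt_div (by positivity), Real.sqrt_sq ht.le]
    rw [hsq]
    have hs0 : Real.sqrt (Ψ ^ 2 + y t ^ 2) ≠ 0 := by positivity
    field_simp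
  have harsinh : Tendsto (fun t => Real.arsinh (x t / Real.sqrt (Ψ ^ 2 + y t ^ 2))) atTop
      (nhds (Real.arsinh (κ₁ / κ₂))) :=
    (Real.continuous_arsinh.continuousAt.tendsto).comp harg
  -- √S / x limit
  set S : ℝ → ℝ := fun t => Ψ ^ 2 + x t ^ 2 + y t ^ 2 with hSdef
  have hSpos : ∀ t, 0 < S t := by
    intro t; simp only [hSdef]; positivity
  have hSx : Tendsto (fun t => Real.sqrt (S t) / x t) atTop
      (nhds (Real.sqrt (κ₁ ^ 2 + κ₂ ^ 2) / κ₁)) := by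
    have h0 : Tendsto (fun t => (Ψ / x t) ^ 2 + 1 + (y t / x t) ^ 2) atTop
        (nhds ((0 : ℝ) ^ 2 + 1 + (κ₂ / κ₁) ^ 2)) :=
      ((hΨx.pow 2).add tendsto_const_nhds).add (hyx.pow 2)
    have h1 : Tendsto (fun t => Real.sqrt ((Ψ / x t) ^ 2 + 1 + (y t / x t) ^ 2)) atTop
        (nhds (Real.sqrt ((0 : ℝ) ^ 2 + 1 + (κ₂ / κ₁) ^ 2))) := h0.sqrt
    have heq : Real.sqrt ((0 : ℝ) ^ 2 + 1 + (κ₂ / κ₁) ^ 2)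
        = Real.sqrt (κ₁ ^ 2 + κ₂ ^ 2) / κ₁ := by
      rw [show (0 : ℝ) ^ 2 + 1 + (κ₂ / κ₁) ^ 2 = (κ₁ ^ 2 + κ₂ ^ 2) / κ₁ ^ 2 by
        field_simp; ring, Real.sqrt_div (by positivity), Real.sqrt_sq hκ₁.le]
    rw [heq] at h1
    refine h1.congr' ?_
    filter_upwards [hxpos] with t ht
    rw [show (Ψ / x t) ^ 2 + 1 + (y t / x t) ^ 2 = S t / x t ^ 2 by
      simp only [hSdef]; field_simp,
      Real.sqrt_div (hSpos t).le, Real.sqrt_sq ht.le]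
  -- A → atTop
  set A : ℝ → ℝ := fun t => x t * y t / (Ψ * Real.sqrt (S t)) with hAdef
  have hxS : Tendsto (fun t => x t / Real.sqrt (S t)) atTop
      (nhds (κ₁ / Real.sqrt (κ₁ ^ 2 + κ₂ ^ 2))) := by
    have := hSx.inv₀ (by positivity)
    simpa [inv_div] using this
  have hA_top : Tendsto A atTop atTop := by
    have h := Tendsto.pos_mul_atTop (C := κ₁ / Real.sqrt (κ₁ ^ 2 + κ₂ ^ 2)) (by positivity)
      hxS (hy_top.atTop_div_const hΨ)
    refine h.congr fun t => ?_
    simp only [hAdef]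
    rw [div_mul_div_comm]
    ring_nf
  have hApos : ∀ᶠ t in atTop, 0 < A t := hA_top.eventually_gt_atTop 0
  -- slope of arctan at 0
  have hslope : Tendsto (fun z : ℝ => Real.arctan z / z) (nhdsWithin 0 {0}ᶜ) (nhds 1) := by
    have h := hasDerivAt_iff_tendsto_slope.mp (Real.hasDerivAt_arctan 0)
    norm_num at h
    refine h.congr fun z => ?_
    simp [slope_def_field]
  have hAinv : Tendsto (fun t => (A t)⁻¹) atTop (nhdsWithin 0 {0}ᶜ) := by
    rw [tendsto_nhdsWithin_iff]
    refine ⟨hA_top.inv_tendsto_atTop, ?_⟩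
    filter_upwards [hApos] with t ht
    simp [ht.ne']
  have hratio : Tendsto (fun t => Real.arctan (A t)⁻¹ / (A t)⁻¹) atTop (nhds 1) :=
    hslope.comp hAinv
  -- tail part
  have htail : Tendsto (fun t => (y t / Ψ) * (π / 2 - Real.arctan (A t))) atTop
      (nhds (Real.sqrt (κ₁ ^ 2 + κ₂ ^ 2) / κ₁)) := by
    have h1 : Tendsto (fun t => (Real.sqrt (S t) / x t) * (Real.arctan (A t)⁻¹ / (A t)⁻¹))
        atTop (nhds (Real.sqrt (κ₁ ^ 2 + κ₂ ^ 2) / κ₁ * 1)) := hSx.mul hratio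
    rw [mul_one] at h1
    refine h1.congr' ?_
    filter_upwards [hApos, hxpos, hypos] with t hA hx hy
    rw [← Real.arctan_inv_of_pos hA]
    have hsq : 0 < Real.sqrt (S t) := Real.sqrt_pos.mpr (hSpos t)
    have hAval : (A t)⁻¹ = Ψ * Real.sqrt (S t) / (x t * y t) := by
      simp [hAdef]
    rw [hAval]
    field_simp
  -- combine
  have hfinal := harsinh.sub htail
  refine hfinal.congr fun t => ?_
  simp only [F, hSdef, hAdef, hxdef, hydef]
  ring

theorem stmt_13 (Ψ κ₁ κ₂ um up a₀ Ω : ℝ) (hΨ : 0 < Ψ) (hκ₁ : 0 < κ₁) (hκ₂ : 0 < κ₂)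
    (ha₀ : 0 < a₀) :
    Filter.Tendsto
      (fun t : ℝ =>
        F Ψ (κ₁ * t + um) (κ₂ * t + a₀ - Ω) - F Ψ (κ₁ * t + um) (κ₂ * t - a₀ - Ω)
          + F Ψ (κ₁ * t + um) (κ₂ * t + a₀ + Ω) - F Ψ (κ₁ * t + um) (κ₂ * t - a₀ + Ω)
          + F Ψ (κ₁ * t + up) (κ₂ * t + a₀ - Ω) - F Ψ (κ₁ * t + up) (κ₂ * t - a₀ - Ω)
          + F Ψ (κ₁ * t + up) (κ₂ * t + a₀ + Ω) - F Ψ (κ₁ * t + up) (κ₂ * t - a₀ + Ω))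
      Filter.atTop (nhds (4 * Real.pi * a₀ / Ψ)) := by
  have h1 := main_piece Ψ κ₁ κ₂ um (a₀ - Ω) hΨ hκ₁ hκ₂
  have h2 := main_piece Ψ κ₁ κ₂ um (-a₀ - Ω) hΨ hκ₁ hκ₂
  have h3 := main_piece Ψ κ₁ κ₂ um (a₀ + Ω) hΨ hκ₁ hκ₂
  have h4 := main_piece Ψ κ₁ κ₂ um (-a₀ + Ω) hΨ hκ₁ hκ₂
  have h5 := main_piece Ψ κ₁ κ₂ up (a₀ - Ω) hΨ hκ₁ hκ₂
  have h6 := main_piece Ψ κ₁ κ₂ up (-a₀ - Ω) hΨ hκ₁ hκ₂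
  have h7 := main_piece Ψ κ₁ κ₂ up (a₀ + Ω) hΨ hκ₁ hκ₂
  have h8 := main_piece Ψ κ₁ κ₂ up (-a₀ + Ω) hΨ hκ₁ hκ₂
  have H := ((((((((h1.sub h2).add h3).sub h4).add h5).sub h6).add h7).sub h8).add
    (tendsto_const_nhds (x := 4 * π * a₀ / Ψ) (f := atTop)))
  set L := Real.arsinh (κ₁ / κ₂) - Real.sqrt (κ₁ ^ 2 + κ₂ ^ 2) / κ₁ with hL
  have hval : L - L + L - L + L - L + L - L + 4 * π * a₀ / Ψ = 4 * π * a₀ / Ψ := by ring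
  rw [hval] at H
  refine H.congr fun t => ?_
  have e1 : κ₂ * t + a₀ - Ω = κ₂ * t + (a₀ - Ω) := by ring
  have e2 : κ₂ * t - a₀ - Ω = κ₂ * t + (-a₀ - Ω) := by ring
  have e3 : κ₂ * t + a₀ + Ω = κ₂ * t + (a₀ + Ω) := by ring
  have e4 : κ₂ * t - a₀ + Ω = κ₂ * t + (-a₀ + Ω) := by ring
  rw [e1, e2, e3, e4]
  have hΨ' : Ψ ≠ 0 := hΨ.ne'
  field_simp
  ring
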